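/- Let A be a finite affine plane of order q with q ≥ 25, and let B be a set of points of A such that every line of A contains at least one point of B. Then |B| ≥ q + ⌊√q⌋ + 3. -/

import Mathlib

open Finset


/-- double counting -/
lemma dc_aux {α β : Type*} (A : Finset α) (Bs : Finset β) (R : α → β → Prop)
    [∀ a b, Decidable (R a b)] :
    ∑ a ∈ A, (Bs.filter (fun b => R a b)).card
      = ∑ b ∈ Bs, (A.filter (fun a => R a b)).card := by
  simp_rw [Finset.card_filter]
  exact Finset.sum_comm

lemma filter_card_one {α : Type*} [Fintype α] (p : α → Prop) [DecidablePred p]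
    (h : ∃! a, p a) : (univ.filter p).card = 1 := by
  obtain ⟨a, ha, hu⟩ := h
  rw [Finset.card_eq_one]
  refine ⟨a, ?_⟩
  ext b
  simp only [Finset.mem_filter, Finset.mem_univ, true_and, Finset.mem_singleton]
  exact ⟨fun hb => hu b hb, fun hb => hb ▸ ha⟩

lemma eq_one_of_sum_le {α : Type*} (T : Finset α) (f : α → ℕ) (h1 : ∀ a ∈ T, 1 ≤ f a)
    (hs : ∑ a ∈ T, f a ≤ T.card) : ∀ a ∈ T, f a = 1 := by
  by_contra hc
  push_neg at hc
  obtain ⟨a, haT, hne⟩ := hc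
  have hlt : ∑ x ∈ T, (fun _ => (1:ℕ)) x < ∑ x ∈ T, f x :=
    Finset.sum_lt_sum h1 ⟨a, haT, by have := h1 a haT; omega⟩
  simp only [Finset.sum_const, smul_eq_mul, mul_one] at hlt
  omega

/-- partition extremal lemma A : parts ≤ k-1 summing to k -/
lemma partA {α : Type*} [DecidableEq α] (T : Finset α) (x : α → ℕ) (k : ℕ) (hk : 2 ≤ k)
    (hs : ∑ a ∈ T, x a = k) (hub : ∀ a ∈ T, x a ≤ k - 1) :
    ∑ a ∈ T, x a * (x a - 1) ≤ (k - 1) * (k - 2) := by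
  by_cases hx : ∃ a ∈ T, x a = k - 1
  · obtain ⟨a₀, ha₀, hxa⟩ := hx
    have hsplit : x a₀ * (x a₀ - 1) + ∑ a ∈ T.erase a₀, x a * (x a - 1)
        = ∑ a ∈ T, x a * (x a - 1) := Finset.add_sum_erase T (fun a => x a * (x a - 1)) ha₀
    have hsplit2 : x a₀ + ∑ a ∈ T.erase a₀, x a = k := by
      rw [Finset.add_sum_erase T x ha₀]; exact hs
    have hrest : ∑ a ∈ T.erase a₀, x a = 1 := by omega
    have hz : ∑ a ∈ T.erase a₀, x a * (x a - 1) = 0 := by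
      apply Finset.sum_eq_zero
      intro b hb
      have hb1 : x b ≤ 1 := by
        have := Finset.single_le_sum (f := x) (fun i _ => Nat.zero_le _) hb
        omega
      have h01 : x b = 0 ∨ x b = 1 := by omega
      rcases h01 with h01 | h01 <;> simp [h01]
    have : x a₀ * (x a₀ - 1) = (k-1) * (k-2) := by rw [hxa]; congr 1
    omega
  · push_neg at hx
    have hub2 : ∀ a ∈ T, x a ≤ k - 2 := by
      intro a ha
      have := hub a ha
      have := hx a ha
      omega
    have hterm : ∀ a ∈ T, x a * (x a - 1) ≤ (k - 3) * x a := by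
      intro a ha
      have h2 := hub2 a ha
      rcases Nat.eq_zero_or_pos (x a) with h0 | h0
      · simp [h0]
      · have : x a - 1 ≤ k - 3 := by omega
        calc x a * (x a - 1) ≤ x a * (k - 3) := Nat.mul_le_mul_left _ this
          _ = (k - 3) * x a := Nat.mul_comm _ _
    calc ∑ a ∈ T, x a * (x a - 1) ≤ ∑ a ∈ T, (k - 3) * x a := Finset.sum_le_sum hterm
      _ = (k - 3) * k := by rw [← Finset.mul_sum, hs]
      _ ≤ (k - 1) * (k - 2) := by
          rcases Nat.lt_or_ge k 3 with h | h
          · have : k - 3 = 0 := by omega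
            simp [this]
          · obtain ⟨j, rfl⟩ : ∃ j, k = j + 3 := ⟨k - 3, by omega⟩
            have e1 : j + 3 - 3 = j := by omega
            have e2 : j + 3 - 1 = j + 2 := by omega
            have e3 : j + 3 - 2 = j + 1 := by omega
            rw [e1, e2, e3]
            nlinarith

/-- partition extremal lemma B : parts ≤ k-2 summing to k -/
lemma partB {α : Type*} [DecidableEq α] (T : Finset α) (x : α → ℕ) (k : ℕ) (hk : 2 ≤ k)
    (hs : ∑ a ∈ T, x a = k) (hub : ∀ a ∈ T, x a ≤ k - 2) :
    ∑ a ∈ T, x a * (x a - 1) ≤ (k - 2) * (k - 3) + 2 := by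
  have hTne : T.Nonempty := by
    rcases Finset.eq_empty_or_nonempty T with h | h
    · exfalso; rw [h] at hs; simp at hs; omega
    · exact h
  obtain ⟨a₀, ha₀, hmax⟩ := Finset.exists_max_image T x hTne
  set m := x a₀ with hm
  have hmk : m ≤ k - 2 := hub a₀ ha₀
  have hsplit2 : m + ∑ a ∈ T.erase a₀, x a = k := by
    rw [hm, Finset.add_sum_erase T x ha₀]; exact hs
  have hrest_ub : ∀ a ∈ T.erase a₀, x a ≤ k - m := by
    intro a ha
    have := Finset.single_le_sum (f := x) (fun i _ => Nat.zero_le _) ha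
    omega
  have hrest_m : ∀ a ∈ T.erase a₀, x a ≤ m := fun a ha => hmax a (Finset.mem_of_mem_erase ha)
  rcases le_or_gt (2 * m) k with hcase | hcase
  · -- m ≤ k/2 : each part ≤ m, so x(x-1) ≤ (m-1) x, total ≤ (m-1)k ≤ (k-2)(k-3)+2
    have hterm : ∀ a ∈ T, x a * (x a - 1) ≤ (m - 1) * x a := by
      intro a ha
      have h2 : x a ≤ m := hmax a ha
      rcases Nat.eq_zero_or_pos (x a) with h0 | h0
      · simp [h0]
      · have : x a - 1 ≤ m - 1 := by omega
        calc x a * (x a - 1) ≤ x a * (m - 1) := Nat.mul_le_mul_left _ this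
          _ = (m - 1) * x a := Nat.mul_comm _ _
    have h3 : ∑ a ∈ T, x a * (x a - 1) ≤ (m - 1) * k := by
      calc ∑ a ∈ T, x a * (x a - 1) ≤ ∑ a ∈ T, (m - 1) * x a := Finset.sum_le_sum hterm
        _ = (m - 1) * k := by rw [← Finset.mul_sum, hs]
    -- (m-1)k ≤ (k-2)(k-3)+2   given 2m ≤ k, via ℤ
    have h4 : (m - 1) * k ≤ (k - 2) * (k - 3) + 2 := by
      rcases Nat.eq_zero_or_pos m with h0 | h0
      · simp [h0]
      · have hcast : ((m:ℤ) - 1) * k ≤ ((k:ℤ) - 2) * ((k:ℤ) - 3) + 2 := by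
          nlinarith [sq_nonneg ((k:ℤ) - 4), sq_nonneg ((k:ℤ) - 2*m),
            (by exact_mod_cast hcase : 2*(m:ℤ) ≤ k), (by exact_mod_cast h0 : (1:ℤ) ≤ m),
            (by exact_mod_cast hk : (2:ℤ) ≤ k)]
        have e1 : ((m - 1 : ℕ) : ℤ) = (m:ℤ) - 1 := by omega
        have e2 : ((k - 2 : ℕ) : ℤ) = (k:ℤ) - 2 := by omega
        have e3 : ((k - 3 : ℕ) : ℤ) = (k:ℤ) - 3 ∨ k = 2 := by omega
        rcases e3 with e3 | e3
        · have : ((m-1) * k : ℕ) ≤ (((k-2)*(k-3)+2 : ℕ) : ℤ) := by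
            push_cast [e1, e2, e3]
            exact_mod_cast hcast
          exact_mod_cast this
        · subst e3
          have : m = 0 := by omega
          omega
    omega
  · -- m > k - m : total ≤ m(m-1) + (k-m)(k-m-1) ≤ (k-2)(k-3)+2
    rcases le_or_gt m 1 with hm1 | hm1
    · -- all parts ≤ 1 : sum of x(x-1) is 0
      have : ∑ a ∈ T, x a * (x a - 1) = 0 := by
        apply Finset.sum_eq_zero
        intro b hb
        have h01 : x b = 0 ∨ x b = 1 := by
          have := le_trans (hmax b hb) hm1; omega
        rcases h01 with h01 | h01 <;> simp [h01]
      omega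
    · have hterm : ∀ a ∈ T.erase a₀, x a * (x a - 1) ≤ (k - m - 1) * x a := by
        intro a ha
        have h2 : x a ≤ k - m := hrest_ub a ha
        rcases Nat.eq_zero_or_pos (x a) with h0 | h0
        · simp [h0]
        · have : x a - 1 ≤ k - m - 1 := by omega
          calc x a * (x a - 1) ≤ x a * (k - m - 1) := Nat.mul_le_mul_left _ this
            _ = (k - m - 1) * x a := Nat.mul_comm _ _
      have h3 : ∑ a ∈ T.erase a₀, x a * (x a - 1) ≤ (k - m - 1) * (k - m) := by
        calc ∑ a ∈ T.erase a₀, x a * (x a - 1) ≤ ∑ a ∈ T.erase a₀, (k - m - 1) * x a :=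
              Finset.sum_le_sum hterm
          _ = (k - m - 1) * (k - m) := by rw [← Finset.mul_sum]; congr 1; omega
      have hsum : ∑ a ∈ T, x a * (x a - 1)
          = m * (m - 1) + ∑ a ∈ T.erase a₀, x a * (x a - 1) := by
        rw [← Finset.add_sum_erase T _ ha₀]
      have h4 : m * (m - 1) + (k - m - 1) * (k - m) ≤ (k - 2) * (k - 3) + 2 := by
        -- 2 ≤ m ≤ k-2,  2(m-2)(k-2-m) ≥ 0
        have hcast : (m:ℤ) * (m - 1) + ((k:ℤ) - m - 1) * ((k:ℤ) - m)
            ≤ ((k:ℤ) - 2) * ((k:ℤ) - 3) + 2 := by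
          have hm2 : (0:ℤ) ≤ (m:ℤ) - 2 := by omega
          have hkm : (0:ℤ) ≤ (k:ℤ) - 2 - m := by
            have : m ≤ k - 2 := hmk
            omega
          nlinarith [mul_nonneg hm2 hkm]
        have e1 : ((m - 1 : ℕ) : ℤ) = (m:ℤ) - 1 := by omega
        have e2 : ((k - m - 1 : ℕ) : ℤ) = (k:ℤ) - m - 1 := by omega
        have e3 : ((k - m : ℕ) : ℤ) = (k:ℤ) - m := by omega
        have e4 : ((k - 2 : ℕ) : ℤ) = (k:ℤ) - 2 := by omega
        have e5 : ((k - 3 : ℕ) : ℤ) = (k:ℤ) - 3 := by omega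
        have : ((m * (m - 1) + (k - m - 1) * (k - m) : ℕ) : ℤ)
            ≤ (((k - 2) * (k - 3) + 2 : ℕ) : ℤ) := by
          push_cast [e1, e2, e3, e4, e5]
          exact_mod_cast hcast
        exact_mod_cast this
      omega
section Geometry

variable {P L : Type*} [Membership P L] [Fintype P] [Fintype L]
  [DecidableEq P] [DecidableEq L] [∀ (p : P) (l : L), Decidable (p ∈ l)]

lemma line_inter_unique (huniq : ∀ p₁ p₂ : P, p₁ ≠ p₂ → ∃! l : L, p₁ ∈ l ∧ p₂ ∈ l)
    {l l' : L} (hne : l ≠ l') {a b : P} (hal : a ∈ l) (hal' : a ∈ l')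
    (hbl : b ∈ l) (hbl' : b ∈ l') : a = b := by
  by_contra hab
  obtain ⟨m, _, hu⟩ := huniq a b hab
  exact hne ((hu l ⟨hal, hbl⟩).trans (hu l' ⟨hal', hbl'⟩).symm)

variable (P) in
def parC (l : L) : Finset L :=
  univ.filter (fun l' => l' = l ∨ ∀ p : P, ¬(p ∈ l' ∧ p ∈ l))

lemma mem_parC {l l' : L} :
    l' ∈ parC P l ↔ (l' = l ∨ ∀ p : P, ¬(p ∈ l' ∧ p ∈ l)) := by
  simp [parC]

lemma parC_self (l : L) : l ∈ parC P l := by simp [parC]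

lemma parC_symm {l l' : L} : l' ∈ parC P l ↔ l ∈ parC P l' := by
  simp only [mem_parC]
  constructor <;> rintro (h | h)
  · exact Or.inl h.symm
  · exact Or.inr (fun p hp => h p ⟨hp.2, hp.1⟩)
  · exact Or.inl h.symm
  · exact Or.inr (fun p hp => h p ⟨hp.2, hp.1⟩)

lemma parC_point (q : ℕ)
    (hpl : ∀ l : L, (univ.filter (fun p : P => p ∈ l)).card = q)
    (hlp : ∀ p : P, (univ.filter (fun l : L => p ∈ l)).card = q + 1)
    (huniq : ∀ p₁ p₂ : P, p₁ ≠ p₂ → ∃! l : L, p₁ ∈ l ∧ p₂ ∈ l)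
    (p : P) (l : L) :
    ((parC P l).filter (fun l' => p ∈ l')).card = 1 := by
  by_cases hp : p ∈ l
  · rw [Finset.card_eq_one]
    refine ⟨l, ?_⟩
    ext l'
    simp only [Finset.mem_filter, Finset.mem_singleton]
    constructor
    · rintro ⟨hl', hpl'⟩
      rcases mem_parC.mp hl' with h | h
      · exact h
      · exact absurd ⟨hpl', hp⟩ (h p)
    · rintro rfl; exact ⟨parC_self _, hp⟩
  · set A := univ.filter (fun l' : L => p ∈ l') with hA
    have hcardA : A.card = q + 1 := hlp p
    set c : L → ℕ := fun l' => ((univ.filter (fun r : P => r ∈ l)).filter (fun r => r ∈ l')).card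
      with hc
    have hsum : ∑ l' ∈ A, c l' = q := by
      have hd := dc_aux A (univ.filter (fun r : P => r ∈ l)) (fun l' (r : P) => r ∈ l')
      rw [hc]
      rw [hd]
      have hone : ∀ r ∈ univ.filter (fun r : P => r ∈ l),
          (A.filter (fun l' => r ∈ l')).card = 1 := by
        intro r hr
        have hrl : r ∈ l := (Finset.mem_filter.mp hr).2
        have hpr : p ≠ r := fun h => hp (h ▸ hrl)
        have heq : A.filter (fun l' => r ∈ l')
            = univ.filter (fun l' : L => p ∈ l' ∧ r ∈ l') := by
          ext l'
          simp [hA, Finset.mem_filter, and_assoc]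
        rw [heq]
        exact filter_card_one _ (huniq p r hpr)
      rw [Finset.sum_congr rfl hone]
      simp [hpl l]
    have hub : ∀ l' ∈ A, c l' ≤ 1 := by
      intro l' hl'
      have hpl' : p ∈ l' := (Finset.mem_filter.mp hl').2
      have hne : l ≠ l' := fun h => hp (h ▸ hpl')
      rw [hc]
      rw [Finset.card_le_one]
      intro a ha b hb
      simp only [Finset.mem_filter, Finset.mem_univ, true_and] at ha hb
      exact line_inter_unique huniq hne ha.1 ha.2 hb.1 hb.2
    have hdis : ∀ l', (c l' = 0 ↔ ∀ r : P, ¬(r ∈ l' ∧ r ∈ l)) := by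
      intro l'
      rw [hc]
      simp only [Finset.card_eq_zero, Finset.filter_eq_empty_iff]
      constructor
      · intro h r hr
        exact h (Finset.mem_filter.mpr ⟨Finset.mem_univ r, hr.2⟩) hr.1
      · intro h r hrm hr'
        exact h r ⟨hr', (Finset.mem_filter.mp hrm).2⟩
    have htarget : (parC P l).filter (fun l' => p ∈ l')
        = A.filter (fun l' => c l' = 0) := by
      ext l'
      simp only [Finset.mem_filter, mem_parC, hA, Finset.mem_univ, true_and]
      constructor
      · rintro ⟨h | h, hp'⟩
        · exact absurd (h ▸ hp') hp
        · exact ⟨hp', (hdis l').mpr h⟩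
      · rintro ⟨hp', h0⟩
        exact ⟨Or.inr ((hdis l').mp h0), hp'⟩
    have hpos : (A.filter (fun l' => ¬(c l' = 0))).card = q := by
      have hstep : ∀ l' ∈ A, c l' = if c l' = 0 then 0 else 1 := by
        intro l' hl'
        have := hub l' hl'
        by_cases h : c l' = 0 <;> simp [h] <;> omega
      have h1 : ∑ l' ∈ A, c l' = ∑ l' ∈ A, (if c l' = 0 then 0 else 1) :=
        Finset.sum_congr rfl hstep
      have h2 : ∑ l' ∈ A, (if c l' = 0 then 0 else 1)
          = (A.filter (fun l' => ¬(c l' = 0))).card := by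
        rw [Finset.card_filter]
        refine Finset.sum_congr rfl fun l' _ => ?_
        by_cases h : c l' = 0 <;> simp [h]
      omega
    have hsplit := Finset.card_filter_add_card_filter_not
      (s := A) (p := fun l' => c l' = 0)
    rw [htarget]
    omega

lemma parC_sum (q : ℕ)
    (hpl : ∀ l : L, (univ.filter (fun p : P => p ∈ l)).card = q)
    (hlp : ∀ p : P, (univ.filter (fun l : L => p ∈ l)).card = q + 1)
    (huniq : ∀ p₁ p₂ : P, p₁ ≠ p₂ → ∃! l : L, p₁ ∈ l ∧ p₂ ∈ l)
    (T : Finset P) (l : L) :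
    ∑ l' ∈ parC P l, (T.filter (fun p => p ∈ l')).card = T.card := by
  rw [dc_aux (parC P l) T (fun l' (p : P) => p ∈ l')]
  have : ∀ p ∈ T, ((parC P l).filter (fun l' => p ∈ l')).card = 1 :=
    fun p _ => parC_point q hpl hlp huniq p l
  rw [Finset.sum_congr rfl this]
  simp

lemma parC_card (q : ℕ) (hq : 0 < q)
    (hP : Fintype.card P = q ^ 2)
    (hpl : ∀ l : L, (univ.filter (fun p : P => p ∈ l)).card = q)
    (hlp : ∀ p : P, (univ.filter (fun l : L => p ∈ l)).card = q + 1)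
    (huniq : ∀ p₁ p₂ : P, p₁ ≠ p₂ → ∃! l : L, p₁ ∈ l ∧ p₂ ∈ l)
    (l : L) : (parC P l).card = q := by
  have h := parC_sum q hpl hlp huniq univ l
  have h2 : ∀ l' ∈ parC P l, (univ.filter (fun p : P => p ∈ l')).card = q :=
    fun l' _ => hpl l'
  rw [Finset.sum_congr rfl h2, Finset.sum_const, smul_eq_mul, Finset.card_univ, hP] at h
  have : q ^ 2 = q * q := sq q
  have hcard := h
  rw [this] at hcard
  exact Nat.eq_of_mul_eq_mul_right hq hcard

lemma parC_mult (q : ℕ) (hq : 0 < q)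
    (hP : Fintype.card P = q ^ 2)
    (hpl : ∀ l : L, (univ.filter (fun p : P => p ∈ l)).card = q)
    (hlp : ∀ p : P, (univ.filter (fun l : L => p ∈ l)).card = q + 1)
    (huniq : ∀ p₁ p₂ : P, p₁ ≠ p₂ → ∃! l : L, p₁ ∈ l ∧ p₂ ∈ l)
    (f : L → ℕ) :
    ∑ l : L, ∑ l' ∈ parC P l, f l' = q * ∑ l' : L, f l' := by
  have h1 : ∀ l : L, ∑ l' ∈ parC P l, f l'
      = ∑ l' : L, if l' ∈ parC P l then f l' else 0 := by
    intro l
    rw [← Finset.sum_filter]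
    congr 1
    ext l'
    simp
  calc ∑ l : L, ∑ l' ∈ parC P l, f l'
      = ∑ l : L, ∑ l' : L, if l' ∈ parC P l then f l' else 0 :=
        Finset.sum_congr rfl fun l _ => h1 l
    _ = ∑ l' : L, ∑ l : L, if l' ∈ parC P l then f l' else 0 := Finset.sum_comm
    _ = ∑ l' : L, ∑ l : L, if l ∈ parC P l' then f l' else 0 := by
        refine Finset.sum_congr rfl fun l' _ => Finset.sum_congr rfl fun l _ => ?_
        rw [if_congr parC_symm rfl rfl]
    _ = ∑ l' : L, (parC P l').card * f l' := by
        refine Finset.sum_congr rfl fun l' _ => ?_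
        rw [← Finset.sum_filter]
        rw [Finset.sum_const, smul_eq_mul]
        congr 2
        ext l
        simp
    _ = q * ∑ l' : L, f l' := by
        rw [Finset.mul_sum]
        exact Finset.sum_congr rfl fun l' _ => by
          rw [parC_card q hq hP hpl hlp huniq l']

end Geometry
lemma nat_id1 (m : ℕ) : m * (m-1) + 2*m = (m+1)*m := by
  cases m with
  | zero => simp
  | succ n => rw [Nat.succ_sub_one]; ring

lemma nat_id2 (n : ℕ) : n*(n-1) + n = n*n := by
  cases n with
  | zero => simp
  | succ m => rw [Nat.succ_sub_one]; ring


lemma arith1 (q s k W : ℤ) (hq : 25 ≤ q) (hs5 : 5 ≤ s) (hsq : s*s ≤ q)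
    (hW : W = q^2 + k^2 - q - 3*k) (hmaster : q*W ≤ (q^2+q)*((k-1)*(k-2)))
    (hk2 : 2 ≤ k) (hks : k ≤ s+1) : False := by
  have hprod : (0:ℤ) ≤ (s+1-k)*(k+s-2) := mul_nonneg (by linarith) (by linarith)
  have ht : k*k - 3*k ≤ s*s - s - 2 := by nlinarith [hprod]
  have h1 : q^3 ≤ q^2*(k*k-3*k) + 3*q^2 + 2*q := by nlinarith [hmaster, hW]
  have h2 : q^2*(k*k-3*k) ≤ q^2*(s*s-s-2) :=
    mul_le_mul_of_nonneg_left ht (by positivity)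
  have h3 : q^2*(s*s-s-2) ≤ q^2*(q-s-2) :=
    mul_le_mul_of_nonneg_left (by linarith) (by positivity)
  have h4 : (s-1)*q^2 ≤ 2*q := by nlinarith [h1, h2, h3]
  have h5 : 4*q^2 ≤ (s-1)*q^2 := mul_le_mul_of_nonneg_right (by linarith) (by positivity)
  nlinarith [h4, h5, hq]

lemma arith2 (q s k W : ℤ) (hq : 25 ≤ q) (hs5 : 5 ≤ s) (hsq : s*s ≤ q)
    (hW : W = q^2 + k^2 - q - 3*k) (hk : k = s+2)
    (hm2 : q*W ≤ (q^2+q)*((k-2)*(k-3)+2)) : False := by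
  subst hk
  have h1 : q^3 ≤ q^2*(s*s) - q^2*s + 3*q^2 - 2*q*s + 4*q := by nlinarith [hm2, hW]
  have h2 : q^2*(s*s) ≤ q^2*q := mul_le_mul_of_nonneg_left hsq (by positivity)
  have h3 : 5*q^2 ≤ s*q^2 := mul_le_mul_of_nonneg_right hs5 (by positivity)
  have h4 : 25*q ≤ q*q := by nlinarith
  have h5 : (0:ℤ) ≤ q*s := by positivity
  nlinarith [h1, h2, h3, h4, h5]


lemma arith3 (q s k W G : ℤ) (hq : 25 ≤ q) (hs5 : 5 ≤ s) (hsq : s*s ≤ q)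
    (hW : W = q^2 + k^2 - q - 3*k) (hk : k = s+2) (hG : G ≤ (s+1)*q)
    (hcomb : q*W ≤ G*((k-1)*(k-2)) + (q^2+q-G)*((k-2)*(k-3)+2)) : False := by
  subst hk
  have hcomb2 : q*W ≤ G*(2*s-2) + (q^2+q)*(s*s-s+2) := by nlinarith [hcomb]
  have h2 : G*(2*s-2) ≤ (s+1)*q*(2*s-2) :=
    mul_le_mul_of_nonneg_right hG (by linarith)
  have hfac : 2 ≤ q - s*s + s - 3 := by linarith
  have h1 : 2*q ≤ q*(q - s*s + s - 3) := by nlinarith [hfac, hq]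
  have hinner : 0 < W - (s+1)*(2*s-2) - (q+1)*(s*s-s+2) := by nlinarith [h1, hsq, hs5]
  have hD : 0 < q * (W - (s+1)*(2*s-2) - (q+1)*(s*s-s+2)) := mul_pos (by linarith) hinner
  nlinarith [hcomb2, hD, h2]

theorem affine_main {P L : Type*} [Membership P L] [Fintype P] [Fintype L]
    [DecidableEq P] [DecidableEq L] [∀ (p : P) (l : L), Decidable (p ∈ l)]
    (q : ℕ) (hq : 25 ≤ q)
    (hP : Fintype.card P = q ^ 2)
    (hL : Fintype.card L = q ^ 2 + q)
    (hpl : ∀ l : L, (univ.filter (fun p : P => p ∈ l)).card = q)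
    (hlp : ∀ p : P, (univ.filter (fun l : L => p ∈ l)).card = q + 1)
    (huniq : ∀ p₁ p₂ : P, p₁ ≠ p₂ → ∃! l : L, p₁ ∈ l ∧ p₂ ∈ l)
    (Bf : Finset P) (hblock : ∀ l : L, ∃ p ∈ Bf, p ∈ l)
    (hsize : Bf.card ≤ q + Nat.sqrt q + 2) : False := by
  have hq0 : 0 < q := by omega
  set s := Nat.sqrt q with hs_def
  have hs5 : 5 ≤ s := Nat.le_sqrt.mpr (by omega)
  have hsq : s * s ≤ q := by have := Nat.sqrt_le' q; rwa [pow_two] at this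
  have hql : q < (s+1) * (s+1) := by
    have := Nat.lt_succ_sqrt' q; rwa [pow_two] at this
  set e : L → ℕ := fun l => (Bf.filter (fun p => p ∈ l)).card with he_def
  have he1 : ∀ l, 1 ≤ e l := by
    intro l
    obtain ⟨p, hp, hpl'⟩ := hblock l
    exact Finset.card_pos.mpr ⟨p, Finset.mem_filter.mpr ⟨hp, hpl'⟩⟩
  have heq : ∀ l, e l ≤ q := by
    intro l
    calc e l ≤ (univ.filter (fun p : P => p ∈ l)).card :=
          Finset.card_le_card (Finset.filter_subset_filter _ (Finset.subset_univ Bf))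
      _ = q := hpl l
  set n := Bf.card with hn_def
  have hparsumB : ∀ l : L, ∑ l' ∈ parC P l, e l' = n :=
    fun l => parC_sum q hpl hlp huniq Bf l
  have hpcard : ∀ l : L, (parC P l).card = q :=
    fun l => parC_card q hq0 hP hpl hlp huniq l
  have hLne : Nonempty L := by
    rw [← Fintype.card_pos_iff, hL]; positivity
  obtain ⟨l₀⟩ := hLne
  have hnq : q ≤ n := by
    calc q = (parC P l₀).card := (hpcard l₀).symm
      _ = ∑ l' ∈ parC P l₀, 1 := by simp
      _ ≤ ∑ l' ∈ parC P l₀, e l' := Finset.sum_le_sum (fun l' _ => he1 l')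
      _ = n := hparsumB l₀
  set k := n - q with hk_def
  have hk : n = q + k := by omega
  have hkub : k ≤ s + 2 := by omega
  -- every line meets B in at most k points
  have hchoice : ∀ l' : L, ∃ p, p ∈ Bf ∧ p ∈ l' := by
    intro l'; obtain ⟨p, h1, h2⟩ := hblock l'; exact ⟨p, h1, h2⟩
  set f : L → P := fun l' => Classical.choose (hchoice l') with hf_def
  have hfspec : ∀ l', (f l') ∈ Bf ∧ (f l') ∈ l' :=
    fun l' => Classical.choose_spec (hchoice l')
  have he_le_k : ∀ l : L, e l ≤ k := by
    intro l
    by_cases hsub : ∀ p : P, p ∈ l → p ∈ Bf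
    · exfalso
      have hinj : ((parC P l).erase l).card ≤ (Bf.filter (fun p => ¬ p ∈ l)).card := by
        apply Finset.card_le_card_of_injOn f
        · intro l' hl'
          have hmem := Finset.mem_of_mem_erase hl'
          have hne := Finset.ne_of_mem_erase hl'
          rcases mem_parC.mp hmem with h | h
          · exact absurd h hne
          · refine Finset.mem_filter.mpr ⟨(hfspec l').1, ?_⟩
            intro hfl
            exact h (f l') ⟨(hfspec l').2, hfl⟩
        · intro l₁ h₁ l₂ h₂ hfe
          rw [Finset.mem_coe] at h₁ h₂
          by_contra hne
          have h₁' := Finset.mem_of_mem_erase h₁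
          have h₂' := Finset.mem_of_mem_erase h₂
          have hp1 : (f l₁) ∈ l₁ := (hfspec l₁).2
          have hp2 : (f l₁) ∈ l₂ := by rw [hfe]; exact (hfspec l₂).2
          have hcard := parC_point q hpl hlp huniq (f l₁) l
          have hsub2 : ({l₁, l₂} : Finset L) ⊆ (parC P l).filter (fun l' => (f l₁) ∈ l') := by
            intro z hz
            simp only [Finset.mem_insert, Finset.mem_singleton] at hz
            rcases hz with rfl | rfl
            · exact Finset.mem_filter.mpr ⟨h₁', hp1⟩
            · exact Finset.mem_filter.mpr ⟨h₂', hp2⟩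
          have h2c : ({l₁, l₂} : Finset L).card = 2 := Finset.card_pair hne
          have := Finset.card_le_card hsub2
          omega
      have herase : ((parC P l).erase l).card = q - 1 := by
        rw [Finset.card_erase_of_mem (parC_self l), hpcard l]
      have hfull : (Bf.filter (fun p => p ∈ l)).card = q := by
        have heqf : Bf.filter (fun p => p ∈ l) = univ.filter (fun p : P => p ∈ l) := by
          ext p
          simp only [Finset.mem_filter, Finset.mem_univ, true_and]
          exact ⟨fun h => h.2, fun h => ⟨hsub p h, h⟩⟩
        rw [heqf]; exact hpl l
      have hsplitB := Finset.card_filter_add_card_filter_not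
        (s := Bf) (p := fun p => p ∈ l)
      have h5s : 5*s ≤ s*s := Nat.mul_le_mul_right s hs5
      omega
    · push_neg at hsub
      obtain ⟨p, hple, hpB⟩ := hsub
      have hinj : ((univ.filter (fun l' : L => p ∈ l')).erase l).card
          ≤ (Bf.filter (fun b => ¬ b ∈ l)).card := by
        apply Finset.card_le_card_of_injOn f
        · intro l' hl'
          have hne := Finset.ne_of_mem_erase hl'
          have hpl'' : p ∈ l' := (Finset.mem_filter.mp (Finset.mem_of_mem_erase hl')).2
          refine Finset.mem_filter.mpr ⟨(hfspec l').1, ?_⟩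
          intro hfl
          have hfp : f l' = p :=
            line_inter_unique huniq (Ne.symm hne) hfl (hfspec l').2 hple hpl''
          exact hpB (hfp ▸ (hfspec l').1)
        · intro l₁ h₁ l₂ h₂ hfe
          rw [Finset.mem_coe] at h₁ h₂
          by_contra hne
          have hp1 : p ∈ l₁ := (Finset.mem_filter.mp (Finset.mem_of_mem_erase h₁)).2
          have hp2 : p ∈ l₂ := (Finset.mem_filter.mp (Finset.mem_of_mem_erase h₂)).2
          have hf1 : (f l₁) ∈ l₁ := (hfspec l₁).2
          have hf2 : (f l₁) ∈ l₂ := by rw [hfe]; exact (hfspec l₂).2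
          have : f l₁ = p := line_inter_unique huniq hne hf1 hf2 hp1 hp2
          exact hpB (this ▸ (hfspec l₁).1)
      have herase : ((univ.filter (fun l' : L => p ∈ l')).erase l).card = q := by
        rw [Finset.card_erase_of_mem (Finset.mem_filter.mpr ⟨Finset.mem_univ l, hple⟩), hlp p]
        omega
      have hsplitB := Finset.card_filter_add_card_filter_not
        (s := Bf) (p := fun p => p ∈ l)
      have hel : e l = (Bf.filter (fun p => p ∈ l)).card := rfl
      omega
  -- k at least 2
  have hk2 : 2 ≤ k := by
    have h1n : 1 < n := by omega
    obtain ⟨a, ha, b, hb, hab⟩ := Finset.one_lt_card.mp h1n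
    obtain ⟨l, ⟨hal, hbl⟩, _⟩ := huniq a b hab
    have h2e : 2 ≤ e l := by
      apply Finset.one_lt_card.mpr
      exact ⟨a, Finset.mem_filter.mpr ⟨ha, hal⟩, b, Finset.mem_filter.mpr ⟨hb, hbl⟩, hab⟩
    have := he_le_k l
    omega
  -- excess function
  set X : L → ℕ := fun l => e l - 1 with hX_def
  have heX : ∀ l, e l = X l + 1 := by
    intro l; have := he1 l; simp only [hX_def]; omega
  have hXub : ∀ l, X l ≤ k - 1 := by
    intro l; have := he_le_k l; have := he1 l; simp only [hX_def]; omega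
  have hXsum_par : ∀ l : L, ∑ l' ∈ parC P l, X l' = k := by
    intro l
    have h1 : ∑ l' ∈ parC P l, (X l' + 1) = n := by
      rw [← hparsumB l]; exact Finset.sum_congr rfl fun l' _ => (heX l').symm
    rw [Finset.sum_add_distrib, Finset.sum_const, smul_eq_mul, mul_one, hpcard l] at h1
    omega
  -- global sums
  have hsum_e : ∑ l : L, e l = n * (q+1) := by
    have hd := dc_aux (univ : Finset L) Bf (fun l (b : P) => b ∈ l)
    have h2 : ∀ b ∈ Bf, ((univ : Finset L).filter (fun l => b ∈ l)).card = q + 1 :=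
      fun b _ => hlp b
    rw [Finset.sum_congr rfl h2, Finset.sum_const, smul_eq_mul] at hd
    exact hd
  have hsum_pairs : ∑ l : L, e l * (e l - 1) = n * (n-1) := by
    have hoff : ∀ l : L, ((Bf.offDiag).filter (fun pr => pr.1 ∈ l ∧ pr.2 ∈ l)).card
        = e l * (e l - 1) := by
      intro l
      have hset : (Bf.offDiag).filter (fun pr => pr.1 ∈ l ∧ pr.2 ∈ l)
          = (Bf.filter (fun p => p ∈ l)).offDiag := by
        ext pr
        simp only [Finset.mem_filter, Finset.mem_offDiag]
        tauto
      rw [hset, Finset.offDiag_card]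
      have h1 := he1 l
      have hel : e l = (Bf.filter (fun p => p ∈ l)).card := rfl
      rw [← hel]
      obtain ⟨m, hm⟩ : ∃ m, e l = m + 1 := ⟨e l - 1, by omega⟩
      rw [hm]
      simp only [Nat.add_sub_cancel]
      rw [Nat.mul_succ]
      omega
    have hd := dc_aux (univ : Finset L) (Bf.offDiag) (fun l pr => pr.1 ∈ l ∧ pr.2 ∈ l)
    have h2 : ∀ pr ∈ Bf.offDiag,
        ((univ : Finset L).filter (fun l => pr.1 ∈ l ∧ pr.2 ∈ l)).card = 1 := by
      intro pr hpr
      rw [Finset.mem_offDiag] at hpr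
      exact filter_card_one _ (huniq pr.1 pr.2 hpr.2.2)
    rw [Finset.sum_congr rfl h2] at hd
    simp only [Finset.sum_const, smul_eq_mul, mul_one] at hd
    rw [Finset.offDiag_card] at hd
    rw [← Finset.sum_congr rfl (fun l (_ : l ∈ univ) => hoff l)]
    rw [hd]
    have := nat_id2 n
    have hnn : (Bf.card) = n := rfl
    rw [hnn]
    omega
  have hcardL : (univ : Finset L).card = q^2 + q := by rw [Finset.card_univ, hL]
  have hSX : ∑ l : L, X l = k * (q+1) := by
    have h1 : ∑ l : L, (X l + 1) = n * (q+1) := by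
      rw [← hsum_e]; exact Finset.sum_congr rfl fun l _ => (heX l).symm
    rw [Finset.sum_add_distrib, Finset.sum_const, smul_eq_mul, mul_one, hcardL] at h1
    have h2 : n * (q+1) = (q^2+q) + k*(q+1) := by rw [hk]; ring
    omega
  set W := ∑ l : L, X l * (X l - 1) with hW_def
  have hWeq : W + 2*(k*(q+1)) + n = n*n := by
    have h1 : ∀ l : L, X l * (X l - 1) + 2 * X l = e l * (e l - 1) := by
      intro l
      rw [heX l, Nat.add_sub_cancel]
      exact nat_id1 (X l)
    have h2 : W + 2 * ∑ l : L, X l = ∑ l : L, e l * (e l - 1) := by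
      rw [hW_def, Finset.mul_sum, ← Finset.sum_add_distrib]
      exact Finset.sum_congr rfl fun l _ => h1 l
    rw [hSX, hsum_pairs] at h2
    have := nat_id2 n
    omega
  -- master inequality
  have hmaster : q * W ≤ (q^2+q) * ((k-1)*(k-2)) := by
    have hper : ∀ l : L, ∑ l' ∈ parC P l, X l' * (X l' - 1) ≤ (k-1)*(k-2) :=
      fun l => partA (parC P l) X k hk2 (hXsum_par l) (fun a _ => hXub a)
    calc q * W = ∑ l : L, ∑ l' ∈ parC P l, X l' * (X l' - 1) :=
          (parC_mult q hq0 hP hpl hlp huniq (fun l' => X l' * (X l' - 1))).symm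
      _ ≤ ∑ _l : L, ((k-1)*(k-2)) := Finset.sum_le_sum (fun l _ => hper l)
      _ = (q^2+q) * ((k-1)*(k-2)) := by rw [Finset.sum_const, smul_eq_mul, hcardL]
  -- k must equal s + 2
  have hWZ : (W:ℤ) = (q:ℤ)^2 + (k:ℤ)^2 - q - 3*k := by
    have hnz : ((n:ℕ):ℤ) = (q:ℤ) + k := by exact_mod_cast hk
    have hWZ0 : (W:ℤ) + 2*((k:ℤ)*((q:ℤ)+1)) + ((n:ℕ):ℤ) = ((n:ℕ):ℤ)*((n:ℕ):ℤ) := by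
      exact_mod_cast hWeq
    rw [hnz] at hWZ0
    linear_combination hWZ0
  have hc1 : ((k-1 : ℕ) : ℤ) = (k:ℤ) - 1 := by omega
  have hc2 : ((k-2 : ℕ) : ℤ) = (k:ℤ) - 2 := by omega
  have hsqZ : ((s:ℤ))*s ≤ (q:ℤ) := by exact_mod_cast hsq
  have hs5Z : (5:ℤ) ≤ (s:ℤ) := by exact_mod_cast hs5
  have hqZ : (25:ℤ) ≤ (q:ℤ) := by exact_mod_cast hq
  have hk2Z : (2:ℤ) ≤ (k:ℤ) := by exact_mod_cast hk2
  have hmasterZ : (q:ℤ) * (W:ℤ) ≤ ((q:ℤ)^2+q) * (((k:ℤ)-1)*((k:ℤ)-2)) := by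
    have hmZ : ((q*W : ℕ):ℤ) ≤ (((q^2+q) * ((k-1)*(k-2)) : ℕ):ℤ) := Int.ofNat_le.mpr hmaster
    push_cast [hc1, hc2] at hmZ
    linarith
  have hkeq : k = s + 2 := by
    by_contra hne
    have hks : k ≤ s + 1 := by omega
    have hksZ : (k:ℤ) ≤ (s:ℤ)+1 := by exact_mod_cast hks
    exact arith1 (q:ℤ) (s:ℤ) (k:ℤ) (W:ℤ) hqZ hs5Z hsqZ hWZ hmasterZ hk2Z hksZ
  -- there is a k-line
  have hkZ : (k:ℤ) = (s:ℤ) + 2 := by exact_mod_cast hkeq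
  have hKLex : ∃ l : L, e l = k := by
    by_contra hno
    push_neg at hno
    have hub2 : ∀ l : L, X l ≤ k - 2 := by
      intro l
      have h1 := he_le_k l
      have h2 := hno l
      have h3 := he1 l
      simp only [hX_def]
      omega
    have hper : ∀ l : L, ∑ l' ∈ parC P l, X l' * (X l' - 1) ≤ (k-2)*(k-3) + 2 :=
      fun l => partB (parC P l) X k hk2 (hXsum_par l) (fun a _ => hub2 a)
    have hm2 : q * W ≤ (q^2+q) * ((k-2)*(k-3)+2) := by
      calc q * W = ∑ l : L, ∑ l' ∈ parC P l, X l' * (X l' - 1) :=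
            (parC_mult q hq0 hP hpl hlp huniq (fun l' => X l' * (X l' - 1))).symm
        _ ≤ ∑ _l : L, ((k-2)*(k-3)+2) := Finset.sum_le_sum (fun l _ => hper l)
        _ = (q^2+q) * ((k-2)*(k-3)+2) := by rw [Finset.sum_const, smul_eq_mul, hcardL]
    have hc3 : ((k-3 : ℕ) : ℤ) = (k:ℤ) - 3 := by omega
    have hm2Z : (q:ℤ) * (W:ℤ) ≤ ((q:ℤ)^2+q) * (((k:ℤ)-2)*((k:ℤ)-3)+2) := by
      have hmZ : ((q*W : ℕ):ℤ) ≤ (((q^2+q) * ((k-2)*(k-3)+2) : ℕ):ℤ) := Int.ofNat_le.mpr hm2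
      push_cast [hc2, hc3] at hmZ
      linarith
    exact arith2 (q:ℤ) (s:ℤ) (k:ℤ) (W:ℤ) hqZ hs5Z hsqZ hWZ hkZ hm2Z
  -- case split on concurrency of all k-lines
  by_cases hA : ∃ b₀ : P, ∀ l : L, e l = k → b₀ ∈ l
  · -- Case A : all k-lines through one point
    obtain ⟨b₀, hb₀⟩ := hA
    set KL := univ.filter (fun l : L => e l = k) with hKL_def
    have hKLsub : KL ⊆ univ.filter (fun l : L => b₀ ∈ l) := by
      intro l hl
      exact Finset.mem_filter.mpr ⟨Finset.mem_univ l, hb₀ l (Finset.mem_filter.mp hl).2⟩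
    set M := KL.card with hM_def
    -- sum of e over lines through a point is at most n + q
    have hlinesum : ∀ p : P, ∑ l ∈ univ.filter (fun l : L => p ∈ l), e l ≤ n + q := by
      intro p
      have hd := dc_aux (univ.filter (fun l : L => p ∈ l)) Bf (fun l (b : P) => b ∈ l)
      have hbound : ∀ b ∈ Bf,
          ((univ.filter (fun l : L => p ∈ l)).filter (fun l => b ∈ l)).card
          ≤ (if b = p then q else 0) + 1 := by
        intro b hb
        by_cases hbp : b = p
        · subst hbp
          rw [if_pos rfl]
          have h1 := Finset.card_le_card
            (Finset.filter_subset (fun l : L => b ∈ l) (univ.filter (fun l : L => b ∈ l)))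
          rw [hlp b] at h1
          omega
        · rw [if_neg hbp]
          have hsub2 : (univ.filter (fun l : L => p ∈ l)).filter (fun l => b ∈ l)
              ⊆ univ.filter (fun l : L => b ∈ l ∧ p ∈ l) := by
            intro z hz
            simp only [Finset.mem_filter] at hz ⊢
            exact ⟨hz.1.1, hz.2, hz.1.2⟩
          have h1 := Finset.card_le_card hsub2
          rw [filter_card_one _ (huniq b p hbp)] at h1
          omega
      calc ∑ l ∈ univ.filter (fun l : L => p ∈ l), e l
          = ∑ b ∈ Bf, ((univ.filter (fun l : L => p ∈ l)).filter (fun l => b ∈ l)).card := hd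
        _ ≤ ∑ b ∈ Bf, ((if b = p then q else 0) + 1) := Finset.sum_le_sum hbound
        _ = (∑ b ∈ Bf, if b = p then q else 0) + n := by
            rw [Finset.sum_add_distrib, Finset.sum_const, smul_eq_mul, mul_one]
        _ ≤ q + n := by
            rw [Finset.sum_ite_eq' Bf p (fun _ => q)]
            by_cases hp : p ∈ Bf <;> simp [hp]
        _ = n + q := Nat.add_comm _ _
    have hXlns : ∑ l ∈ univ.filter (fun l : L => b₀ ∈ l), X l + (q+1)
        ≤ n + q := by
      have h1 : ∑ l ∈ univ.filter (fun l : L => b₀ ∈ l), (X l + 1)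
          = ∑ l ∈ univ.filter (fun l : L => b₀ ∈ l), e l :=
        Finset.sum_congr rfl fun l _ => (heX l).symm
      rw [Finset.sum_add_distrib, Finset.sum_const, smul_eq_mul, mul_one, hlp b₀] at h1
      have := hlinesum b₀
      omega
    have hMX : M * (k-1) ≤ ∑ l ∈ univ.filter (fun l : L => b₀ ∈ l), X l := by
      calc M * (k-1) = ∑ _l ∈ KL, (k-1) := by rw [Finset.sum_const, smul_eq_mul, ← hM_def]
        _ = ∑ l ∈ KL, X l := by
            refine Finset.sum_congr rfl fun l hl => ?_
            have hek : e l = k := (Finset.mem_filter.mp hl).2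
            simp only [hX_def]
            omega
        _ ≤ ∑ l ∈ univ.filter (fun l : L => b₀ ∈ l), X l :=
            Finset.sum_le_sum_of_subset hKLsub
    have hM : M ≤ s + 1 := by
      have hk1 : k - 1 = s + 1 := by omega
      rw [hk1] at hMX
      have hexp1 : (s+2)*(s+1) = s*s + 3*s + 2 := by ring
      have hexp2 : (s+1)*(s+1) = s*s + 2*s + 1 := by ring
      by_contra hM'
      push_neg at hM'
      have h2 : (s+2)*(s+1) ≤ M*(s+1) := Nat.mul_le_mul_right _ hM'
      omega
    set Good := univ.filter (fun l : L => ∃ l' ∈ KL, l' ∈ parC P l) with hGood_def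
    have hGoodcard : Good.card ≤ M * q := by
      have hsub3 : Good ⊆ KL.biUnion (fun l' => parC P l') := by
        intro l hl
        obtain ⟨l', hl', hpar⟩ := (Finset.mem_filter.mp hl).2
        exact Finset.mem_biUnion.mpr ⟨l', hl', parC_symm.mp hpar⟩
      calc Good.card ≤ (KL.biUnion (fun l' => parC P l')).card := Finset.card_le_card hsub3
        _ ≤ ∑ l' ∈ KL, (parC P l').card := Finset.card_biUnion_le
        _ = ∑ _l' ∈ KL, q := Finset.sum_congr rfl fun l' _ => hpcard l'
        _ = M * q := by rw [Finset.sum_const, smul_eq_mul, ← hM_def]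
    have hperA : ∀ l : L, ∑ l' ∈ parC P l, X l' * (X l' - 1) ≤ (k-1)*(k-2) :=
      fun l => partA (parC P l) X k hk2 (hXsum_par l) (fun a _ => hXub a)
    have hperB : ∀ l : L, l ∉ Good → ∑ l' ∈ parC P l, X l' * (X l' - 1) ≤ (k-2)*(k-3)+2 := by
      intro l hl
      apply partB (parC P l) X k hk2 (hXsum_par l)
      intro a ha
      by_contra hxa
      push_neg at hxa
      have hXa : X a = k - 1 := by have := hXub a; omega
      have hea : e a = k := by
        have h3 := he1 a
        simp only [hX_def] at hXa
        omega
      exact hl (Finset.mem_filter.mpr ⟨Finset.mem_univ l,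
        ⟨a, Finset.mem_filter.mpr ⟨Finset.mem_univ a, hea⟩, ha⟩⟩)
    have hGle : Good.card ≤ q^2 + q := by
      have := Finset.card_le_card (Finset.subset_univ Good)
      rwa [hcardL] at this
    have hcomb : q * W ≤ Good.card * ((k-1)*(k-2))
        + (q^2+q - Good.card) * ((k-2)*(k-3)+2) := by
      have hsplit : ∑ l : L, (if l ∈ Good then (k-1)*(k-2) else (k-2)*(k-3)+2)
          = Good.card * ((k-1)*(k-2)) + (q^2+q - Good.card) * ((k-2)*(k-3)+2) := by
        rw [Finset.sum_ite]
        have hg1 : univ.filter (fun l : L => l ∈ Good) = Good := by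
          ext l; simp
        have hg2 := Finset.card_filter_add_card_filter_not
          (s := (univ : Finset L)) (p := fun l : L => l ∈ Good)
        rw [hg1] at hg2 ⊢
        rw [Finset.sum_const, Finset.sum_const, smul_eq_mul, smul_eq_mul]
        rw [hcardL] at hg2
        have : (univ.filter (fun l : L => ¬ l ∈ Good)).card = q^2 + q - Good.card := by omega
        rw [this]
      calc q * W = ∑ l : L, ∑ l' ∈ parC P l, X l' * (X l' - 1) :=
            (parC_mult q hq0 hP hpl hlp huniq (fun l' => X l' * (X l' - 1))).symm
        _ ≤ ∑ l : L, (if l ∈ Good then (k-1)*(k-2) else (k-2)*(k-3)+2) := by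
            refine Finset.sum_le_sum fun l _ => ?_
            by_cases h : l ∈ Good
            · rw [if_pos h]; exact hperA l
            · rw [if_neg h]; exact hperB l h
        _ = _ := hsplit
    -- cast and close
    have hGQ : Good.card ≤ (s+1) * q :=
      le_trans hGoodcard (Nat.mul_le_mul_right q hM)
    have hGQZ : ((Good.card : ℕ):ℤ) ≤ ((s:ℤ)+1) * q := by exact_mod_cast hGQ
    have hc3 : ((k-3 : ℕ) : ℤ) = (k:ℤ) - 3 := by omega
    have hc4 : ((q^2 + q - Good.card : ℕ) : ℤ) = (q:ℤ)^2 + q - Good.card := by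
      have : ((q^2 + q : ℕ):ℤ) = (q:ℤ)^2 + q := by push_cast; ring
      omega
    have hcombZ : (q:ℤ) * W ≤ (Good.card:ℤ) * (((k:ℤ)-1)*((k:ℤ)-2))
        + ((q:ℤ)^2+q-(Good.card:ℤ)) * (((k:ℤ)-2)*((k:ℤ)-3)+2) := by
      have h0 := Int.ofNat_le.mpr hcomb
      push_cast [hc1, hc2, hc3, hc4] at h0
      linarith
    exact arith3 (q:ℤ) (s:ℤ) (k:ℤ) (W:ℤ) (Good.card:ℤ) hqZ hs5Z hsqZ hWZ hkZ hGQZ hcombZ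
  · -- Case ¬A : for every point some k-line avoids it
    push_neg at hA
    obtain ⟨L0, hL0⟩ := hKLex
    have hline_pt_sum : ∀ p : P, p ∉ Bf →
        ∑ l ∈ univ.filter (fun l : L => p ∈ l), e l = n := by
      intro p hp
      have hd := dc_aux (univ.filter (fun l : L => p ∈ l)) Bf (fun l (b : P) => b ∈ l)
      have hone : ∀ b ∈ Bf,
          ((univ.filter (fun l : L => p ∈ l)).filter (fun l => b ∈ l)).card = 1 := by
        intro b hb
        have hbp : b ≠ p := fun h => hp (h ▸ hb)
        have heq2 : (univ.filter (fun l : L => p ∈ l)).filter (fun l => b ∈ l)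
            = univ.filter (fun l : L => b ∈ l ∧ p ∈ l) := by
          ext z
          simp only [Finset.mem_filter, Finset.mem_univ, true_and]
          tauto
        rw [heq2]
        exact filter_card_one _ (huniq b p hbp)
      rw [hd, Finset.sum_congr rfl hone]
      simp [hn_def]
    have htangent : ∀ ls : L, e ls = k → ∀ r : P, r ∈ ls → r ∉ Bf →
        ∀ l : L, r ∈ l → l ≠ ls → e l = 1 := by
      intro ls hls r hr hrB l hl hne
      have hsum := hline_pt_sum r hrB
      have hmem : ls ∈ univ.filter (fun l : L => r ∈ l) :=
        Finset.mem_filter.mpr ⟨Finset.mem_univ _, hr⟩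
      have hsplit : e ls + ∑ l' ∈ (univ.filter (fun l : L => r ∈ l)).erase ls, e l'
          = ∑ l' ∈ univ.filter (fun l : L => r ∈ l), e l' :=
        Finset.add_sum_erase _ e hmem
      have hcarde : ((univ.filter (fun l : L => r ∈ l)).erase ls).card = q := by
        rw [Finset.card_erase_of_mem hmem, hlp r]
        omega
      have hsum_le : ∑ l' ∈ (univ.filter (fun l : L => r ∈ l)).erase ls, e l'
          ≤ ((univ.filter (fun l : L => r ∈ l)).erase ls).card := by
        rw [hcarde]; omega
      exact eq_one_of_sum_le _ e (fun a _ => he1 a) hsum_le l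
        (Finset.mem_erase.mpr ⟨hne, Finset.mem_filter.mpr ⟨Finset.mem_univ _, hl⟩⟩)
    have hsecb : ∀ b ∈ Bf, (univ.filter (fun l : L => b ∈ l ∧ 2 ≤ e l)).card ≤ k + 1 := by
      intro b hb
      obtain ⟨ls, hls, hbls⟩ := hA b
      set Tang := univ.filter (fun l : L => b ∈ l ∧ e l = 1) with hT_def
      set Off := (univ.filter (fun p : P => p ∈ ls)).filter (fun p => ¬ p ∈ Bf) with hOff_def
      have hOffcard : Off.card + k = q := by
        have hsplit := Finset.card_filter_add_card_filter_not
          (s := univ.filter (fun p : P => p ∈ ls)) (p := fun p => p ∈ Bf)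
        have h1 : (univ.filter (fun p : P => p ∈ ls)).filter (fun p => p ∈ Bf)
            = Bf.filter (fun p => p ∈ ls) := by
          ext p
          simp only [Finset.mem_filter, Finset.mem_univ, true_and]
          tauto
        rw [h1, hpl ls] at hsplit
        have h2 : (Bf.filter (fun p => p ∈ ls)).card = k := hls
        have h4 : (univ.filter (fun p : P => p ∈ ls)).filter
            (fun a => ¬ (fun p : P => p ∈ Bf) a) = Off := rfl
        rw [h4] at hsplit
        omega
      have hchoice2 : ∀ r : P, r ≠ b → ∃ l : L, r ∈ l ∧ b ∈ l :=
        fun r hrb => (huniq r b hrb).exists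
      have hOT : Off.card ≤ Tang.card := by
        set g : P → L := fun r => if h : r ≠ b then Classical.choose (hchoice2 r h) else ls
          with hg_def
        apply Finset.card_le_card_of_injOn g
        · intro r hr
          have hrls : r ∈ ls := (Finset.mem_filter.mp ((Finset.mem_filter.mp hr).1)).2
          have hrB : ¬ r ∈ Bf := (Finset.mem_filter.mp hr).2
          have hrb : r ≠ b := fun h => hrB (h ▸ hb)
          have hgr : g r = Classical.choose (hchoice2 r hrb) := by
            rw [hg_def]; simp [hrb]
          have hspec := Classical.choose_spec (hchoice2 r hrb)
          have hbg : b ∈ g r := by rw [hgr]; exact hspec.2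
          have hrg : r ∈ g r := by rw [hgr]; exact hspec.1
          have hgne : g r ≠ ls := fun h => hbls (h ▸ hbg)
          have he1g : e (g r) = 1 := htangent ls hls r hrls hrB (g r) hrg hgne
          exact Finset.mem_filter.mpr ⟨Finset.mem_univ _, hbg, he1g⟩
        · intro r₁ h₁ r₂ h₂ hge
          rw [Finset.mem_coe] at h₁ h₂
          have hr1ls : r₁ ∈ ls := (Finset.mem_filter.mp ((Finset.mem_filter.mp h₁).1)).2
          have hr2ls : r₂ ∈ ls := (Finset.mem_filter.mp ((Finset.mem_filter.mp h₂).1)).2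
          have hr1B : ¬ r₁ ∈ Bf := (Finset.mem_filter.mp h₁).2
          have hr2B : ¬ r₂ ∈ Bf := (Finset.mem_filter.mp h₂).2
          have hr1b : r₁ ≠ b := fun h => hr1B (h ▸ hb)
          have hr2b : r₂ ≠ b := fun h => hr2B (h ▸ hb)
          have hg1 : g r₁ = Classical.choose (hchoice2 r₁ hr1b) := by
            rw [hg_def]; simp [hr1b]
          have hg2 : g r₂ = Classical.choose (hchoice2 r₂ hr2b) := by
            rw [hg_def]; simp [hr2b]
          have hspec1 := Classical.choose_spec (hchoice2 r₁ hr1b)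
          have hspec2 := Classical.choose_spec (hchoice2 r₂ hr2b)
          have hbg : b ∈ g r₁ := by rw [hg1]; exact hspec1.2
          have hgne : g r₁ ≠ ls := fun h => hbls (h ▸ hbg)
          have hr1g : r₁ ∈ g r₁ := by rw [hg1]; exact hspec1.1
          have hr2g : r₂ ∈ g r₁ := by rw [hge, hg2]; exact hspec2.1
          exact line_inter_unique huniq hgne hr1g hr1ls hr2g hr2ls
      have hdisj : Disjoint Tang (univ.filter (fun l : L => b ∈ l ∧ 2 ≤ e l)) := by
        rw [Finset.disjoint_left]
        intro z hz1 hz2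
        have h1 := (Finset.mem_filter.mp hz1).2.2
        have h2 := (Finset.mem_filter.mp hz2).2.2
        omega
      have hsubU : Tang ∪ univ.filter (fun l : L => b ∈ l ∧ 2 ≤ e l)
          ⊆ univ.filter (fun l : L => b ∈ l) := by
        intro z hz
        rcases Finset.mem_union.mp hz with h | h
        · exact Finset.mem_filter.mpr ⟨Finset.mem_univ _, (Finset.mem_filter.mp h).2.1⟩
        · exact Finset.mem_filter.mpr ⟨Finset.mem_univ _, (Finset.mem_filter.mp h).2.1⟩
      have hfinal : Tang.card + (univ.filter (fun l : L => b ∈ l ∧ 2 ≤ e l)).card ≤ q + 1 := by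
        calc Tang.card + (univ.filter (fun l : L => b ∈ l ∧ 2 ≤ e l)).card
            = (Tang ∪ univ.filter (fun l : L => b ∈ l ∧ 2 ≤ e l)).card :=
              (Finset.card_union_of_disjoint hdisj).symm
          _ ≤ (univ.filter (fun l : L => b ∈ l)).card := Finset.card_le_card hsubU
          _ = q + 1 := hlp b
      omega
    set SEC := univ.filter (fun l : L => 2 ≤ e l) with hSEC_def
    have hNlow : 2 * (q^2 + q) ≤ q * SEC.card := by
      have hper2 : ∀ l : L, 2 ≤ ((parC P l).filter (fun l' => 2 ≤ e l')).card := by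
        intro l
        by_contra hcon
        push_neg at hcon
        have hcard1 : ((parC P l).filter (fun l' => 2 ≤ e l')).card ≤ 1 := by omega
        have hsum2 : ∑ l' ∈ (parC P l).filter (fun l' => 2 ≤ e l'), X l'
            = ∑ l' ∈ parC P l, X l' := by
          apply Finset.sum_filter_of_ne
          intro l' _ hXne
          have := he1 l'
          simp only [hX_def] at hXne
          omega
        have hle2 : ∑ l' ∈ (parC P l).filter (fun l' => 2 ≤ e l'), X l'
            ≤ ((parC P l).filter (fun l' => 2 ≤ e l')).card * (k-1) :=
          Finset.sum_le_card_nsmul _ _ _ (fun a _ => hXub a)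
        rw [hsum2, hXsum_par l] at hle2
        have : ((parC P l).filter (fun l' => 2 ≤ e l')).card * (k-1) ≤ 1 * (k-1) :=
          Nat.mul_le_mul_right _ hcard1
        omega
      have hmult2 := parC_mult q hq0 hP hpl hlp huniq (fun l' => if 2 ≤ e l' then 1 else 0)
      have hind : ∀ l : L, ∑ l' ∈ parC P l, (if 2 ≤ e l' then 1 else 0)
          = ((parC P l).filter (fun l' => 2 ≤ e l')).card :=
        fun l => (Finset.card_filter _ _).symm
      have hSECcard : ∑ l' : L, (if 2 ≤ e l' then 1 else 0) = SEC.card :=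
        (Finset.card_filter _ _).symm
      calc 2*(q^2+q) = ∑ _l : L, 2 := by rw [Finset.sum_const, smul_eq_mul, hcardL, mul_comm]
        _ ≤ ∑ l : L, ((parC P l).filter (fun l' => 2 ≤ e l')).card :=
            Finset.sum_le_sum (fun l _ => hper2 l)
        _ = ∑ l : L, ∑ l' ∈ parC P l, (if 2 ≤ e l' then 1 else 0) :=
            Finset.sum_congr rfl (fun l _ => (hind l).symm)
        _ = q * ∑ l' : L, (if 2 ≤ e l' then 1 else 0) := hmult2
        _ = q * SEC.card := by rw [hSECcard]
    have hNup : SEC.card ≤ k*k + 2 := by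
      have hXl0 : X L0 = k - 1 := by simp only [hX_def]; rw [hL0]
      have herase1 : X L0 + ∑ l' ∈ (parC P L0).erase L0, X l' = k := by
        rw [Finset.add_sum_erase (parC P L0) X (parC_self L0)]
        exact hXsum_par L0
      have hparsec : ((parC P L0).filter (fun l' => 2 ≤ e l')).card ≤ 2 := by
        have hsubF : ((parC P L0).filter (fun l' => 2 ≤ e l')).erase L0
            ⊆ (parC P L0).erase L0 :=
          Finset.erase_subset_erase _ (Finset.filter_subset _ _)
        have hXge : ∀ l' ∈ ((parC P L0).filter (fun l' => 2 ≤ e l')).erase L0, 1 ≤ X l' := by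
          intro l' hl'
          have h2 := (Finset.mem_filter.mp (Finset.mem_of_mem_erase hl')).2
          simp only [hX_def]
          omega
        have hcard_le : (((parC P L0).filter (fun l' => 2 ≤ e l')).erase L0).card ≤ 1 := by
          calc (((parC P L0).filter (fun l' => 2 ≤ e l')).erase L0).card
              = (((parC P L0).filter (fun l' => 2 ≤ e l')).erase L0).card * 1 := by ring
            _ ≤ ∑ l' ∈ ((parC P L0).filter (fun l' => 2 ≤ e l')).erase L0, X l' :=
                Finset.card_nsmul_le_sum _ _ _ hXge
            _ ≤ ∑ l' ∈ (parC P L0).erase L0, X l' :=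
                Finset.sum_le_sum_of_subset hsubF
            _ = 1 := by omega
        have hsub5 : (parC P L0).filter (fun l' => 2 ≤ e l')
            ⊆ insert L0 ((((parC P L0).filter (fun l' => 2 ≤ e l'))).erase L0) := by
          intro z hz
          by_cases hzL : z = L0
          · exact Finset.mem_insert.mpr (Or.inl hzL)
          · exact Finset.mem_insert.mpr (Or.inr (Finset.mem_erase.mpr ⟨hzL, hz⟩))
        calc ((parC P L0).filter (fun l' => 2 ≤ e l')).card
            ≤ (insert L0 ((((parC P L0).filter (fun l' => 2 ≤ e l'))).erase L0)).card :=
              Finset.card_le_card hsub5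
          _ ≤ (((parC P L0).filter (fun l' => 2 ≤ e l')).erase L0).card + 1 :=
              Finset.card_insert_le _ _
          _ ≤ 2 := by omega
      have hsub4 : SEC ⊆ ((parC P L0).filter (fun l' => 2 ≤ e l'))
          ∪ (Bf.filter (fun p => p ∈ L0)).biUnion
              (fun b => (univ.filter (fun l : L => b ∈ l ∧ 2 ≤ e l)).erase L0) := by
        intro σ hσ
        have h2σ : 2 ≤ e σ := (Finset.mem_filter.mp hσ).2
        by_cases hp : σ ∈ parC P L0
        · exact Finset.mem_union_left _ (Finset.mem_filter.mpr ⟨hp, h2σ⟩)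
        · have hne : σ ≠ L0 := fun h => hp (h ▸ parC_self L0)
          have hmeet : ∃ r : P, r ∈ σ ∧ r ∈ L0 := by
            by_contra hno2
            push_neg at hno2
            exact hp (mem_parC.mpr (Or.inr (fun r hr => (hno2 r hr.1) hr.2)))
          obtain ⟨r, hrσ, hrL⟩ := hmeet
          have hrB : r ∈ Bf := by
            by_contra hrB
            have := htangent L0 hL0 r hrL hrB σ hrσ hne
            omega
          exact Finset.mem_union_right _ (Finset.mem_biUnion.mpr
            ⟨r, Finset.mem_filter.mpr ⟨hrB, hrL⟩,
             Finset.mem_erase.mpr ⟨hne, Finset.mem_filter.mpr ⟨Finset.mem_univ σ, hrσ, h2σ⟩⟩⟩)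
      have hbcard : (Bf.filter (fun p => p ∈ L0)).card = k := hL0
      have hbiU : ((Bf.filter (fun p => p ∈ L0)).biUnion
          (fun b => (univ.filter (fun l : L => b ∈ l ∧ 2 ≤ e l)).erase L0)).card ≤ k * k := by
        calc ((Bf.filter (fun p => p ∈ L0)).biUnion
            (fun b => (univ.filter (fun l : L => b ∈ l ∧ 2 ≤ e l)).erase L0)).card
            ≤ ∑ b ∈ Bf.filter (fun p => p ∈ L0),
                ((univ.filter (fun l : L => b ∈ l ∧ 2 ≤ e l)).erase L0).card :=
              Finset.card_biUnion_le
          _ ≤ ∑ _b ∈ Bf.filter (fun p => p ∈ L0), k := by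
              refine Finset.sum_le_sum fun b hb => ?_
              have hbB : b ∈ Bf := (Finset.mem_filter.mp hb).1
              have hbL : b ∈ L0 := (Finset.mem_filter.mp hb).2
              have hL0mem : L0 ∈ univ.filter (fun l : L => b ∈ l ∧ 2 ≤ e l) :=
                Finset.mem_filter.mpr ⟨Finset.mem_univ _, hbL, by omega⟩
              rw [Finset.card_erase_of_mem hL0mem]
              have := hsecb b hbB
              omega
          _ = k * k := by rw [Finset.sum_const, smul_eq_mul, hbcard]
      calc SEC.card ≤ (((parC P L0).filter (fun l' => 2 ≤ e l'))
          ∪ (Bf.filter (fun p => p ∈ L0)).biUnion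
              (fun b => (univ.filter (fun l : L => b ∈ l ∧ 2 ≤ e l)).erase L0)).card :=
            Finset.card_le_card hsub4
        _ ≤ ((parC P L0).filter (fun l' => 2 ≤ e l')).card
            + ((Bf.filter (fun p => p ∈ L0)).biUnion
              (fun b => (univ.filter (fun l : L => b ∈ l ∧ 2 ≤ e l)).erase L0)).card :=
            Finset.card_union_le _ _
        _ ≤ k*k + 2 := by omega
    have hfin : 2*(q^2+q) ≤ q*(k*k+2) :=
      le_trans hNlow (Nat.mul_le_mul_left q hNup)
    have hcancel : 2*(q+1) ≤ k*k+2 := by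
      have h1 : q*(2*(q+1)) = 2*(q^2+q) := by ring
      have h2 : q*(2*(q+1)) ≤ q*(k*k+2) := by rw [h1]; exact hfin
      exact Nat.le_of_mul_le_mul_left h2 hq0
    have hkk : k*k = s*s + 4*s + 4 := by rw [hkeq]; ring
    have h5s : 5*s ≤ s*s := Nat.mul_le_mul_right s hs5
    omega

/-- An axiomatization of a finite affine plane of order `q` with point type `P` and
line type `L`: there are `q ^ 2` points and `q ^ 2 + q` lines, each line has `q` points,
each point lies on `q + 1` lines, and any two distinct points lie on a unique line. -/
structure IsAffinePlaneOfOrder (P L : Type*) [Membership P L] (q : ℕ) : Prop where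
  card_points : Nat.card P = q ^ 2
  card_lines : Nat.card L = q ^ 2 + q
  points_per_line : ∀ l : L, Nat.card {p : P // p ∈ l} = q
  lines_per_point : ∀ p : P, Nat.card {l : L // p ∈ l} = q + 1
  exists_unique_line : ∀ p₁ p₂ : P, p₁ ≠ p₂ → ∃! l : L, p₁ ∈ l ∧ p₂ ∈ l

theorem stmt14 {P L : Type*} [Membership P L] (q : ℕ) (hq : 25 ≤ q)
    (hA : IsAffinePlaneOfOrder P L q) (B : Set P)
    (hB : ∀ l : L, ∃ p ∈ B, p ∈ l) :
    q + Nat.sqrt q + 3 ≤ B.ncard := by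
  classical
  have hq0 : 0 < q := by omega
  have hPfin : Finite P := Nat.finite_of_card_ne_zero (by
    rw [hA.card_points]; positivity)
  have hLfin : Finite L := Nat.finite_of_card_ne_zero (by
    rw [hA.card_lines]; positivity)
  haveI := Fintype.ofFinite P
  haveI := Fintype.ofFinite L
  have hP : Fintype.card P = q ^ 2 := by
    rw [← Nat.card_eq_fintype_card]; exact hA.card_points
  have hL : Fintype.card L = q ^ 2 + q := by
    rw [← Nat.card_eq_fintype_card]; exact hA.card_lines
  have hpl : ∀ l : L, (Finset.univ.filter (fun p : P => p ∈ l)).card = q := by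
    intro l
    rw [← Fintype.card_subtype, ← Nat.card_eq_fintype_card]
    exact hA.points_per_line l
  have hlp : ∀ p : P, (Finset.univ.filter (fun l : L => p ∈ l)).card = q + 1 := by
    intro p
    rw [← Fintype.card_subtype, ← Nat.card_eq_fintype_card]
    exact hA.lines_per_point p
  by_contra hcon
  push_neg at hcon
  have hBfin : B.Finite := B.toFinite
  have hblock : ∀ l : L, ∃ p ∈ hBfin.toFinset, p ∈ l := by
    intro l
    obtain ⟨p, h1, h2⟩ := hB l
    exact ⟨p, hBfin.mem_toFinset.mpr h1, h2⟩
  have hsize : (hBfin.toFinset).card ≤ q + Nat.sqrt q + 2 := by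
    have := Set.ncard_eq_toFinset_card B hBfin
    omega
  exact affine_main q hq hP hL hpl hlp hA.exists_unique_line hBfin.toFinset hblock hsize
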